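/- For a positive integer n and an indeterminate q, ∑_{k=0}^{n} qbinom(2n+1, n-k)·(qbinom(2n, n-k) − qbinom(2n, n-k-1))·q^{k(k+1)} = q^n·qbinom(2n,n)^2, where qbinom denotes the Gaussian (q-)binomial coefficient. -/

import Mathlib

open Finset Polynomial

/-- Gaussian binomial coefficient as a polynomial in `q`, via the q-Pascal rule. -/
noncomputable def qb : ℕ → ℕ → Polynomial ℤ
  | _, 0 => 1
  | 0, _ + 1 => 0
  | n + 1, k + 1 => qb n k + Polynomial.X ^ (k + 1) * qb n (k + 1)

/-- Gaussian binomial with integer arguments, zero outside `0 ≤ k ≤ n`. -/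
noncomputable def qbinom (n k : ℤ) : Polynomial ℤ :=
  if 0 ≤ k ∧ k ≤ n then qb n.toNat k.toNat else 0

lemma qb_zero (n : ℕ) : qb n 0 = 1 := by cases n <;> rfl

lemma qb_pascal1 (n k : ℕ) : qb (n + 1) (k + 1) = qb n k + X ^ (k + 1) * qb n (k + 1) := rfl

lemma qb_eq_zero_of_lt : ∀ n k : ℕ, n < k → qb n k = 0 := by
  intro n
  induction n with
  | zero => intro k hk; cases k with
    | zero => omega
    | succ k => rfl
  | succ m ih =>
    intro k hk
    cases k with
    | zero => omega
    | succ k =>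
      rw [qb_pascal1, ih k (by omega), ih (k + 1) (by omega)]
      simp

lemma qb_one_succ : ∀ n : ℕ, qb (n + 1) 1 = qb n 1 + X ^ n := by
  intro n
  induction n with
  | zero => simp [qb_pascal1, qb_zero, qb]
  | succ m ih =>
    have p1 : qb (m + 2) 1 = qb (m + 1) 0 + X ^ 1 * qb (m + 1) 1 := qb_pascal1 (m + 1) 0
    have p2 : qb (m + 1) 1 = qb m 0 + X ^ 1 * qb m 1 := qb_pascal1 m 0
    rw [qb_zero] at p1 p2
    linear_combination p1 + X ^ 1 * ih - p2

lemma qb_pascal2 : ∀ n k : ℕ, k ≤ n → qb (n + 1) (k + 1) = qb n (k + 1) + X ^ (n - k) * qb n k := by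
  intro n
  induction n with
  | zero =>
    intro k hk
    interval_cases k
    simp [qb_pascal1, qb_zero, qb]
  | succ N IH =>
    intro k hk
    cases k with
    | zero =>
      rw [qb_one_succ, qb_zero]
      simp
    | succ k =>
      by_cases h : k = N
      · subst h
        rw [qb_eq_zero_of_lt (k + 1) (k + 2) (by omega)]
        rw [qb_pascal1, qb_eq_zero_of_lt (k + 1) (k + 2) (by omega)]
        simp
      · have hk' : k < N := by omega
        obtain ⟨d, rfl⟩ : ∃ d, N = k + 1 + d := ⟨N - k - 1, by omega⟩
        have P0 : qb (k + 1 + d + 2) (k + 2) =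
            qb (k + 1 + d + 1) (k + 1) + X ^ (k + 2) * qb (k + 1 + d + 1) (k + 2) :=
          qb_pascal1 (k + 1 + d + 1) (k + 1)
        have P1 : qb (k + 1 + d + 1) (k + 1) =
            qb (k + 1 + d) (k + 1) + X ^ (d + 1) * qb (k + 1 + d) k := by
          have := IH k (by omega)
          rwa [show k + 1 + d - k = d + 1 from by omega] at this
        have P2 : qb (k + 1 + d + 1) (k + 2) =
            qb (k + 1 + d) (k + 2) + X ^ d * qb (k + 1 + d) (k + 1) := by
          have := IH (k + 1) (by omega)
          rwa [show k + 1 + d - (k + 1) = d from by omega] at this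
        have P3 : qb (k + 1 + d + 1) (k + 2) =
            qb (k + 1 + d) (k + 1) + X ^ (k + 2) * qb (k + 1 + d) (k + 2) :=
          qb_pascal1 (k + 1 + d) (k + 1)
        have P4 : qb (k + 1 + d + 1) (k + 1) =
            qb (k + 1 + d) k + X ^ (k + 1) * qb (k + 1 + d) (k + 1) :=
          qb_pascal1 (k + 1 + d) k
        rw [show k + 1 + d + 1 - (k + 1) = d + 1 from by omega]
        linear_combination P0 + P1 + X ^ (k + 2) * P2 - P3 - X ^ (d + 1) * P4

lemma qb_key (N j : ℕ) (h : j ≤ N) :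
    qb (N + 1) (j + 1) * (qb N (j + 1) - qb N j) =
      X ^ (j + 1) * qb N (j + 1) ^ 2 - X ^ (N - j) * qb N j ^ 2 := by
  have h1 := qb_pascal1 N j
  have h2 := qb_pascal2 N j h
  linear_combination qb N (j + 1) * h1 - qb N j * h2

lemma qbinom_eq (a b : ℕ) (x y : ℤ) (hx : x = a) (hy : y = b) (h : b ≤ a) :
    qbinom x y = qb a b := by
  subst hx; subst hy
  simp only [qbinom]
  rw [if_pos ⟨Int.natCast_nonneg b, by exact_mod_cast h⟩]
  simp

lemma qbinom_neg (x y : ℤ) (h : y < 0) : qbinom x y = 0 := by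
  simp only [qbinom]
  rw [if_neg]
  omega

theorem stmt_12 (n : ℕ) (hn : 1 ≤ n) :
    ∑ k ∈ range (n + 1),
        qbinom (2 * (n : ℤ) + 1) ((n : ℤ) - k) *
          (qbinom (2 * (n : ℤ)) ((n : ℤ) - k) - qbinom (2 * (n : ℤ)) ((n : ℤ) - k - 1)) *
          Polynomial.X ^ (k * (k + 1)) =
      Polynomial.X ^ n * qbinom (2 * (n : ℤ)) n ^ 2 := by
  set f : ℕ → Polynomial ℤ := fun k => X ^ (n + k ^ 2) * qbinom (2 * (n : ℤ)) ((n : ℤ) - k) ^ 2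
    with hf
  have hmain : ∀ k ∈ range (n + 1),
      qbinom (2 * (n : ℤ) + 1) ((n : ℤ) - k) *
          (qbinom (2 * (n : ℤ)) ((n : ℤ) - k) - qbinom (2 * (n : ℤ)) ((n : ℤ) - k - 1)) *
          Polynomial.X ^ (k * (k + 1)) = f k - f (k + 1) := by
    intro k hk
    rw [Finset.mem_range] at hk
    have hkn : k ≤ n := by omega
    by_cases hke : k = n
    · subst hke
      have e1 : qbinom (2 * (k : ℤ) + 1) ((k : ℤ) - k) = qb (2 * k + 1) 0 :=
        qbinom_eq _ _ _ _ (by push_cast; ring) (by push_cast; ring) (by omega)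
      have e2 : qbinom (2 * (k : ℤ)) ((k : ℤ) - k) = qb (2 * k) 0 :=
        qbinom_eq _ _ _ _ (by push_cast; ring) (by push_cast; ring) (by omega)
      have e3 : qbinom (2 * (k : ℤ)) ((k : ℤ) - k - 1) = 0 := qbinom_neg _ _ (by omega)
      have e4 : qbinom (2 * (k : ℤ)) ((k : ℤ) - (k + 1 : ℕ)) = 0 := by
        apply qbinom_neg; push_cast; omega
      rw [hf]
      simp only [e1, e2, e3, e4, qb_zero]
      rw [show k * (k + 1) = k + k ^ 2 from by ring]
      ring
    · have hkn' : k < n := by omega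
      set j : ℕ := n - k - 1 with hj
      have hnk : n = j + 1 + k := by omega
      have e1 : qbinom (2 * (n : ℤ) + 1) ((n : ℤ) - k) = qb (2 * n + 1) (j + 1) :=
        qbinom_eq _ _ _ _ (by push_cast; ring) (by push_cast; omega) (by omega)
      have e2 : qbinom (2 * (n : ℤ)) ((n : ℤ) - k) = qb (2 * n) (j + 1) :=
        qbinom_eq _ _ _ _ (by push_cast; ring) (by push_cast; omega) (by omega)
      have e3 : qbinom (2 * (n : ℤ)) ((n : ℤ) - k - 1) = qb (2 * n) j :=
        qbinom_eq _ _ _ _ (by push_cast; ring) (by push_cast; omega) (by omega)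
      have e4 : qbinom (2 * (n : ℤ)) ((n : ℤ) - (k + 1 : ℕ)) = qb (2 * n) j :=
        qbinom_eq _ _ _ _ (by push_cast; ring) (by push_cast; omega) (by omega)
      have hkey := qb_key (2 * n) j (by omega)
      have ha : n + k ^ 2 = (j + 1) + k * (k + 1) := by rw [hnk]; ring
      have hb : n + (k + 1) ^ 2 = (2 * n - j) + k * (k + 1) := by
        have h2 : 2 * n - j = n + k + 1 := by omega
        rw [h2, hnk]; ring
      rw [hf]
      simp only [e1, e2, e3, e4]
      rw [hkey, ha, hb, pow_add, pow_add]
      ring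
  rw [Finset.sum_congr rfl hmain, Finset.sum_range_sub' f]
  have hfn : f (n + 1) = 0 := by
    have h0 : qbinom (2 * (n : ℤ)) ((n : ℤ) - ((n + 1 : ℕ) : ℤ)) = 0 :=
      qbinom_neg _ _ (by push_cast; omega)
    simp only [hf]
    rw [h0]
    ring
  rw [hfn, sub_zero, hf]
  simp
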